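/- Let v : ℝ → ℝ be positive continuous, ℓ > 0, and P : ℝ → (0,1) continuous. Suppose ∫_x^{x+ℓ/P(x)} 1/v(A^P(z)) dz = t_p for all x, where A^P : ℝ → ℝ is continuous with lim_{x→+∞} P(x) = ρ⁺ ∈ (0,1) and lim_{x→+∞} A^P(x) = ρ⁺. Then t_p = ℓ/(ρ⁺·v(ρ⁺)). -/

import Mathlib

open Filter

theorem period_value
    (v : ℝ → ℝ) (hv_pos : ∀ y, 0 < v y) (hv_cont : Continuous v)
    (ℓ : ℝ) (hℓ : 0 < ℓ)
    (P : ℝ → ℝ) (hPcont : Continuous P)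
    (hP : ∀ x, 0 < P x ∧ P x < 1)
    (A : ℝ → ℝ) (hA_cont : Continuous A)
    (tp : ℝ)
    (hperiod : ∀ x : ℝ, ∫ z in x..(x + ℓ / P x), 1 / v (A z) = tp)
    (ρp : ℝ) (hρp : 0 < ρp ∧ ρp < 1)
    (hPlim : Tendsto P atTop (nhds ρp))
    (hAlim : Tendsto A atTop (nhds ρp)) :
    tp = ℓ / (ρp * v ρp) := by
  have hvρ : 0 < v ρp := hv_pos ρp
  set c : ℝ := 1 / v ρp with hc
  have hcpos : 0 < c := by positivity
  set L : ℝ := ℓ / ρp with hL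
  have hLpos : 0 < L := div_pos hℓ hρp.1
  have hcont_h : Continuous (fun z => 1 / v (A z)) :=
    continuous_const.div (hv_cont.comp hA_cont) (fun z => (hv_pos _).ne')
  have hLd : Tendsto (fun x => ℓ / P x) atTop (nhds L) :=
    tendsto_const_nhds.div hPlim hρp.1.ne'
  have hh : Tendsto (fun z => 1 / v (A z)) atTop (nhds c) := by
    have hcv : Continuous (fun y => 1 / v y) :=
      continuous_const.div hv_cont (fun y => (hv_pos y).ne')
    exact (hcv.tendsto ρp).comp hAlim
  have hmain : Tendsto (fun x => ∫ z in x..(x + ℓ / P x), 1 / v (A z))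
      atTop (nhds (L * c)) := by
    rw [Metric.tendsto_nhds]
    intro ε hε
    set D : ℝ := L + 1 with hD
    have hDpos : 0 < D := by positivity
    set δ : ℝ := ε / (2 * D) with hδ
    have hδpos : 0 < δ := by positivity
    -- eventually bounds
    have E1 : ∀ᶠ x in atTop, ℓ / P x ≤ D := by
      filter_upwards [hLd (Metric.ball_mem_nhds L one_pos)] with x hx
      have := abs_lt.1 (by simpa [Real.dist_eq] using hx)
      linarith [this.2]
    have E2 : ∀ᶠ x in atTop, |ℓ / P x - L| < ε / (2 * c) := by
      have : ∀ᶠ x in atTop, dist (ℓ / P x) L < ε / (2 * c) :=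
        hLd (Metric.ball_mem_nhds L (by positivity))
      filter_upwards [this] with x hx
      simpa [Real.dist_eq] using hx
    have E3 : ∀ᶠ z in atTop, |1 / v (A z) - c| ≤ δ := by
      have : ∀ᶠ z in atTop, dist (1 / v (A z)) c < δ :=
        hh (Metric.ball_mem_nhds c hδpos)
      filter_upwards [this] with z hz
      exact le_of_lt (by simpa [Real.dist_eq] using hz)
    obtain ⟨N, hN⟩ := eventually_atTop.mp E3
    filter_upwards [E1, E2, eventually_ge_atTop N] with x hx1 hx2 hxN
    set d : ℝ := ℓ / P x with hd
    have hdpos : 0 < d := div_pos hℓ (hP x).1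
    have hint : IntervalIntegrable (fun z => 1 / v (A z)) MeasureTheory.volume x (x + d) :=
      hcont_h.intervalIntegrable _ _
    have hintc : IntervalIntegrable (fun _ : ℝ => c) MeasureTheory.volume x (x + d) :=
      intervalIntegrable_const
    have hsub : (∫ z in x..(x + d), (1 / v (A z) - c)) =
        (∫ z in x..(x + d), 1 / v (A z)) - d * c := by
      rw [intervalIntegral.integral_sub hint hintc, intervalIntegral.integral_const,
        add_sub_cancel_left, smul_eq_mul]
    have hbound : ‖∫ z in x..(x + d), (1 / v (A z) - c)‖ ≤ δ * |x + d - x| := by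
      apply intervalIntegral.norm_integral_le_of_norm_le_const
      intro z hz
      have hxz : x < z := by
        rcases Set.mem_uIoc.1 hz with h | h
        · exact h.1
        · linarith [h.1, h.2, hdpos]
      have : N ≤ z := le_trans hxN hxz.le
      simpa [Real.norm_eq_abs] using hN z this
    have habs : |x + d - x| = d := by
      rw [add_sub_cancel_left, abs_of_pos hdpos]
    have h1 : |(∫ z in x..(x + d), 1 / v (A z)) - d * c| ≤ δ * d := by
      rw [← hsub]
      simpa [Real.norm_eq_abs, add_sub_cancel_left, abs_of_pos hdpos] using hbound
    have h2 : |d * c - L * c| < ε / 2 := by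
      rw [← sub_mul, abs_mul, abs_of_pos hcpos]
      calc |d - L| * c < (ε / (2 * c)) * c := by
            exact mul_lt_mul_of_pos_right hx2 hcpos
        _ = ε / 2 := by field_simp
    have h1' : δ * d ≤ ε / 2 := by
      have : δ * d ≤ δ * D := mul_le_mul_of_nonneg_left hx1 hδpos.le
      calc δ * d ≤ δ * D := this
        _ = ε / 2 := by rw [hδ]; field_simp
    rw [Real.dist_eq]
    calc |(∫ z in x..(x + d), 1 / v (A z)) - L * c|
        ≤ |(∫ z in x..(x + d), 1 / v (A z)) - d * c| + |d * c - L * c| := by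
          have := abs_sub_abs_le_abs_sub ((∫ z in x..(x + d), 1 / v (A z)) - L * c) 0
          exact abs_sub_le _ (d * c) _
      _ < ε / 2 + ε / 2 := by
          have := lt_of_le_of_lt (add_le_add_right (le_trans h1 h1') _)
            (add_lt_add_left h2 (ε / 2))
          linarith [le_trans h1 h1', h2]
      _ = ε := by ring
  have hconst : Tendsto (fun _ : ℝ => tp) atTop (nhds tp) := tendsto_const_nhds
  have heq : (fun x => ∫ z in x..(x + ℓ / P x), 1 / v (A z)) = fun _ => tp := by
    funext x; exact hperiod x
  rw [heq] at hmain
  have : tp = L * c := tendsto_nhds_unique hconst hmain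
  rw [this, hL, hc]
  field_simp
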